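/- If a Lindblad generator L(H, {L_k}) in standard form (L_k|Ψ⟩ = 0 for all k and H|Ψ⟩ = h|Ψ⟩) leaves ρ_d = |Ψ⟩⟨Ψ| invariant, then for each k, D_k ρ_d D_k† = 0; consequently, writing each noise operator as D_k = D_{N_k} ⊗ I on a tensor factorization H = H_{N_k} ⊗ H_{N̄_k}, the reduced state ρ_{N_k} = Tr_{N̄_k}(ρ_d) satisfies supp(ρ_{N_k}) ⊆ ker(D_{N_k}). -/

import Mathlib

open Matrix Kronecker
open scoped ComplexOrder

/-- Partial trace over the second tensor factor. -/
noncomputable def ptraceB {A B : Type*} [Fintype B] (ρ : Matrix (A × B) (A × B) ℂ) :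
    Matrix A A ℂ :=
  fun a a' => ∑ b : B, ρ (a, b) (a', b)

/-- if a Lindblad generator in standard form (`L_k|Ψ⟩ = 0` for all `k`
and `H|Ψ⟩ = h|Ψ⟩`, `H` Hermitian) leaves `ρ_d = |Ψ⟩⟨Ψ|` invariant, then for a
quasi-local noise operator `L_{k0} = D_N ⊗ I` we have `L_{k0} ρ_d L_{k0}† = 0` and
`supp(ρ_N) ⊆ ker(D_N)` where `ρ_N = Tr_B(ρ_d)`. -/
theorem stmt_3 {A B ι : Type*} [Fintype A] [Fintype B] [DecidableEq A] [DecidableEq B]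
    [Fintype ι]
    (H : Matrix (A × B) (A × B) ℂ) (hH : H.IsHermitian)
    (L : ι → Matrix (A × B) (A × B) ℂ)
    (ψ : A × B → ℂ) (hψ : dotProduct (star ψ) ψ = 1)
    (hstd : ∀ k, (L k).mulVec ψ = 0)
    (h : ℝ) (hHe : H.mulVec ψ = (h : ℂ) • ψ)
    (k0 : ι) (DN : Matrix A A ℂ) (hk0 : L k0 = DN ⊗ₖ (1 : Matrix B B ℂ)) :
    L k0 * vecMulVec ψ (star ψ) * (L k0)ᴴ = 0 ∧
      LinearMap.range (ptraceB (vecMulVec ψ (star ψ))).mulVecLin ≤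
        LinearMap.ker DN.mulVecLin := by
  have h1 : L k0 * vecMulVec ψ (star ψ) = 0 := by
    ext i j
    have hz : ∑ m, L k0 i m * ψ m = 0 := congrFun (hstd k0) i
    simp only [Matrix.mul_apply, vecMulVec_apply, Matrix.zero_apply, Pi.star_apply]
    calc ∑ m, L k0 i m * (ψ m * star (ψ j))
        = (∑ m, L k0 i m * ψ m) * star (ψ j) := by
          rw [Finset.sum_mul]; simp [mul_assoc]
      _ = 0 := by rw [hz, zero_mul]
  have hD : ∀ a b, ∑ c, DN a c * ψ (c, b) = 0 := by
    intro a b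
    have := congrFun (hstd k0) (a, b)
    rw [hk0] at this
    simpa [Matrix.mulVec, dotProduct, Fintype.sum_prod_type,
      Matrix.one_apply, mul_ite, ite_mul, mul_zero, zero_mul] using this
  have h2 : DN * ptraceB (vecMulVec ψ (star ψ)) = 0 := by
    ext a a'
    simp only [Matrix.mul_apply, ptraceB, vecMulVec_apply, Matrix.zero_apply,
      Pi.star_apply, Finset.mul_sum]
    rw [Finset.sum_comm]
    refine Finset.sum_eq_zero fun b _ => ?_
    calc ∑ c, DN a c * (ψ (c, b) * star (ψ (a', b)))
        = (∑ c, DN a c * ψ (c, b)) * star (ψ (a', b)) := by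
          rw [Finset.sum_mul]; simp [mul_assoc]
      _ = 0 := by rw [hD a b, zero_mul]
  constructor
  · rw [h1, Matrix.zero_mul]
  · rintro x ⟨v, rfl⟩
    simp only [LinearMap.mem_ker, Matrix.mulVecLin_apply, Matrix.mulVec_mulVec,
      h2, Matrix.zero_mulVec]
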